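/- For every k > 0 and every x ≥ 0 one has (x²+1)^{k/2} · ∫_x^∞ (y²+1)^{-(k+1)/2} dy ≤ 2^{(k+1)/2}/k. -/

import Mathlib

open MeasureTheory Set Real Filter

lemma aux_pt (k : ℝ) (hk : 0 < k) (y : ℝ) (hy : 0 ≤ y) :
    (y ^ 2 + 1) ^ (-(k + 1) / 2) ≤ 2 ^ ((k + 1) / 2) * (y + 1) ^ (-(k + 1)) := by
  set a := (k + 1) / 2 with ha
  have ha0 : 0 < a := by positivity
  have hy1 : (0:ℝ) < y + 1 := by linarith
  have hys : (0:ℝ) < y ^ 2 + 1 := by positivity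
  have key : (y + 1) ^ (k + 1) ≤ 2 ^ a * (y ^ 2 + 1) ^ a := by
    have h1 : (y + 1) ^ (2:ℝ) ≤ 2 * (y ^ 2 + 1) := by
      rw [rpow_two]
      nlinarith [sq_nonneg (y - 1)]
    clear_value a
    calc (y + 1) ^ (k + 1) = ((y + 1) ^ (2:ℝ)) ^ a := by
          rw [← rpow_mul hy1.le]
          congr 1; rw [ha]; ring
      _ ≤ (2 * (y ^ 2 + 1)) ^ a := by
          apply rpow_le_rpow (by positivity) h1 ha0.le
      _ = 2 ^ a * (y ^ 2 + 1) ^ a := mul_rpow (by norm_num) hys.le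
  have h2 : (y ^ 2 + 1) ^ (-(k + 1) / 2) = ((y ^ 2 + 1) ^ a)⁻¹ := by
    rw [← rpow_neg hys.le]; congr 1; rw [ha]; ring
  have h3 : 2 ^ a * (y + 1) ^ (-(k + 1)) = ((y + 1) ^ (k + 1) / 2 ^ a)⁻¹ := by
    rw [rpow_neg hy1.le]
    field_simp
  rw [h2, h3]
  apply inv_anti₀
  · positivity
  · rw [div_le_iff₀ (by positivity)]
    linarith [key]

lemma aux_int (k : ℝ) (hk : 0 < k) (x : ℝ) (hx : 0 ≤ x) :
    (∫ y in Set.Ioi x, (y + 1) ^ (-(k + 1)) = (x + 1) ^ (-k) / k) ∧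
    IntegrableOn (fun y : ℝ => (y + 1) ^ (-(k + 1))) (Set.Ioi x) := by
  set g : ℝ → ℝ := fun y => -(y + 1) ^ (-k) / k with hg
  have hderiv : ∀ y ∈ Set.Ici x, HasDerivAt g ((y + 1) ^ (-(k + 1))) y := by
    intro y hy
    have hy1 : (0:ℝ) < y + 1 := by simp at hy; linarith
    have h1 : HasDerivAt (fun y : ℝ => y + 1) 1 y := (hasDerivAt_id y).add_const 1
    have h2 := h1.rpow_const (p := -k) (Or.inl hy1.ne')
    have h3 := (h2.neg.div_const k)
    refine h3.congr_deriv ?_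
    field_simp
    rw [show -k - 1 = -(k+1) by ring]
  have hpos : ∀ y ∈ Set.Ioi x, 0 ≤ (y + 1) ^ (-(k + 1)) := by
    intro y hy
    have : (0:ℝ) < y + 1 := by simp at hy; linarith
    positivity
  have htend : Tendsto g atTop (nhds 0) := by
    have : Tendsto (fun y : ℝ => (y + 1) ^ (-k)) atTop (nhds 0) := by
      have := (tendsto_rpow_neg_atTop hk).comp (tendsto_atTop_add_const_right atTop 1 tendsto_id)
      simpa [Function.comp_def] using this
    have := (this.neg).div_const k
    simpa using this
  exact ⟨by
    have := integral_Ioi_of_hasDerivAt_of_nonneg' hderiv hpos htend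
    rw [this]; simp [hg]; ring,
    integrableOn_Ioi_deriv_of_nonneg' hderiv hpos htend⟩



/-- The case `q = 1`, `β = 0` of Lemma C.1 (i): for `k > 0` and `x ≥ 0`,
`(x²+1)^{k/2} ∫_x^∞ (y²+1)^{-(k+1)/2} dy ≤ 2^{(k+1)/2}/k`. -/
theorem stmt_1 (k : ℝ) (hk : 0 < k) (x : ℝ) (hx : 0 ≤ x) :
    (x ^ 2 + 1) ^ (k / 2) * (∫ y in Set.Ioi x, (y ^ 2 + 1) ^ (-(k + 1) / 2))
      ≤ 2 ^ ((k + 1) / 2) / k := by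
  have hx1 : (0:ℝ) < x + 1 := by linarith
  obtain ⟨hval, hint⟩ := aux_int k hk x hx
  have hbint : IntegrableOn (fun y : ℝ => 2 ^ ((k+1)/2) * (y + 1) ^ (-(k + 1))) (Set.Ioi x) :=
    hint.const_mul _
  have hfc : Continuous (fun y : ℝ => (y ^ 2 + 1) ^ (-(k + 1) / 2)) := by
    apply Continuous.rpow_const (by continuity)
    intro y; left; positivity
  have hfint : IntegrableOn (fun y : ℝ => (y ^ 2 + 1) ^ (-(k + 1) / 2)) (Set.Ioi x) := by
    apply Integrable.mono' hbint hfc.aestronglyMeasurable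
    filter_upwards [ae_restrict_mem measurableSet_Ioi] with y hy
    rw [Real.norm_eq_abs, abs_of_nonneg (by positivity)]
    exact aux_pt k hk y (le_trans hx (le_of_lt hy))
  have hmono : (∫ y in Set.Ioi x, (y ^ 2 + 1) ^ (-(k + 1) / 2))
      ≤ ∫ y in Set.Ioi x, 2 ^ ((k+1)/2) * (y + 1) ^ (-(k + 1)) := by
    apply setIntegral_mono_on hfint hbint measurableSet_Ioi
    intro y hy
    exact aux_pt k hk y (le_trans hx (le_of_lt hy))
  rw [MeasureTheory.integral_const_mul, hval] at hmono
  have hInn : 0 ≤ ∫ y in Set.Ioi x, (y ^ 2 + 1) ^ (-(k + 1) / 2) :=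
    setIntegral_nonneg measurableSet_Ioi fun y _ => by positivity
  have hw : (x ^ 2 + 1) ^ (k / 2) ≤ (x + 1) ^ k := by
    calc (x ^ 2 + 1) ^ (k / 2) ≤ ((x + 1) ^ (2:ℝ)) ^ (k / 2) := by
          apply rpow_le_rpow (by positivity) _ (by positivity)
          rw [rpow_two]; nlinarith
      _ = (x + 1) ^ k := by rw [← rpow_mul hx1.le]; ring_nf
  calc (x ^ 2 + 1) ^ (k / 2) * (∫ y in Set.Ioi x, (y ^ 2 + 1) ^ (-(k + 1) / 2))
      ≤ (x + 1) ^ k * (2 ^ ((k+1)/2) * ((x + 1) ^ (-k) / k)) :=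
        mul_le_mul hw hmono hInn (by positivity)
    _ = 2 ^ ((k + 1) / 2) / k := by
        rw [show (x + 1) ^ k * (2 ^ ((k+1)/2) * ((x + 1) ^ (-k) / k))
            = ((x + 1) ^ k * (x + 1) ^ (-k)) * (2 ^ ((k+1)/2) / k) by ring,
          ← rpow_add hx1]
        simp
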